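/- Let G be a finite connected discrete graph without loops and without 1-valent vertices, let Γ be its associated metric graph, let B be a maximal chain of bridge edges in Γ with endpoints v_1 and v_2, and let T be a spanning tree of Γ. Let D be an effective divisor on Γ equivalent to 2K_G such that (1) the support of D contains a point from the relative interior of each edge contained in the complement of T, and (2) D ≥ K_G − (v_1) − (v_2). If f is a tropical rational function on Γ with div(f) = D − 2K_G, then the locus of points of Γ where f achieves its minimum value is equal to B. -/

import Mathlib

open scoped Classical

noncomputable section

/-- A finite connected-type datum: a finite discrete (multi)graph without
loops together with a positive length attached to each edge; this is the
combinatorial model of a metric graph `Γ` (the geometric realization of the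
graph in which the edge `e` is an interval of length `len e`). -/
structure LooplessMetricGraph where
  /-- the vertices -/
  V : Type
  /-- the edges (multiple edges between two vertices are allowed) -/
  E : Type
  [fintypeV : Fintype V]
  [fintypeE : Fintype E]
  nonemptyV : Nonempty V
  src : E → V
  dst : E → V
  /-- the graph has no loops -/
  no_loops : ∀ e, src e ≠ dst e
  /-- the length of each edge of the metric graph -/
  len : E → ℝ
  len_pos : ∀ e, 0 < len e

attribute [instance] LooplessMetricGraph.fintypeV LooplessMetricGraph.fintypeE

namespace LooplessMetricGraph

variable (G : LooplessMetricGraph)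

/-- The points of the metric graph `Γ`: a vertex, or an interior point of an
edge `e` at arclength distance `t ∈ (0, len e)` from its source. -/
abbrev Point : Type := G.V ⊕ (Σ e : G.E, {t : ℝ // 0 < t ∧ t < G.len e})

/-- Two vertices are joined by an edge belonging to the edge set `S`. -/
def Step (S : Set G.E) (v w : G.V) : Prop :=
  ∃ e ∈ S, (G.src e = v ∧ G.dst e = w) ∨ (G.src e = w ∧ G.dst e = v)

/-- The vertices `v` and `w` are joined by a path of edges in `S`. -/
def Reaches (S : Set G.E) (v w : G.V) : Prop :=
  Relation.ReflTransGen (G.Step S) v w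

/-- The edge set `S` connects all vertices of the graph. -/
def SpanningConnected (S : Set G.E) : Prop := ∀ v w, G.Reaches S v w

/-- The graph is connected. -/
def Connected : Prop := G.SpanningConnected Set.univ

/-- `T` is a spanning tree: its edges connect all the vertices, and removing
any one of them destroys this property. -/
def IsSpanningTree (T : Set G.E) : Prop :=
  G.SpanningConnected T ∧ ∀ e ∈ T, ¬ G.SpanningConnected (T \ {e})

/-- An edge is a bridge if it is not contained in any non-trivial cycle,
equivalently (for a connected graph) if its removal disconnects the graph. -/
def IsBridge (e : G.E) : Prop := ¬ G.SpanningConnected (Set.univ \ {e})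

/-- The set of points of `Γ` lying on the closed edge `e`. -/
def onEdge (e : G.E) : Set G.Point :=
  {p | p = Sum.inl (G.src e) ∨ p = Sum.inl (G.dst e) ∨
    ∃ t, p = Sum.inr ⟨e, t⟩}

/-- For a spanning tree `T` and an edge `e ∉ T`, the unique cycle `Z(T, e)`
in `T ∪ {e}`, as a set of points of `Γ`: the union of the closed edges of
`T ∪ {e}` whose removal does not disconnect `T ∪ {e}`. -/
def cycleSet (T : Set G.E) (e : G.E) : Set G.Point :=
  ⋃ e' ∈ {e' ∈ T ∪ {e} | G.SpanningConnected ((T ∪ {e}) \ {e'})}, G.onEdge e'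

/-- The valency of a vertex. -/
def valAt (v : G.V) : ℕ :=
  (Finset.univ.filter fun e => G.src e = v).card +
    (Finset.univ.filter fun e => G.dst e = v).card

/-- The canonical divisor `K_G = Σ_v (val(v) − 2)·v` of the graph, as a
function on the points of `Γ` supported on the vertices. -/
def canonical : G.Point → ℤ :=
  fun p => match p with
    | Sum.inl v => (G.valAt v : ℤ) - 2
    | Sum.inr _ => 0

/-- The restriction of a function on `Γ` to the closed edge `e`, as a
function of the arclength parameter `t ∈ [0, len e]` (junk values outside
this interval). -/
def edgeFun (f : G.Point → ℝ) (e : G.E) : ℝ → ℝ := fun t =>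
  if h : 0 < t ∧ t < G.len e then f (Sum.inr ⟨e, t, h⟩)
  else if t ≤ 0 then f (Sum.inl (G.src e)) else f (Sum.inl (G.dst e))

end LooplessMetricGraph

/-- `g` is piecewise affine with integer slopes on the interval `[a, b]`. -/
def PwIntAffineOn (g : ℝ → ℝ) (a b : ℝ) : Prop :=
  ∃ (n : ℕ) (t : Fin (n + 1) → ℝ) (s : Fin n → ℤ) (c : Fin n → ℝ),
    t 0 = a ∧ t (Fin.last n) = b ∧ Monotone t ∧
    ∀ i : Fin n, ∀ x ∈ Set.Icc (t i.castSucc) (t i.succ),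
      g x = (s i : ℝ) * x + c i

/-- `g` has outgoing slope `s` at `t` in the increasing direction. -/
def HasRightSlope (g : ℝ → ℝ) (t s : ℝ) : Prop :=
  Filter.Tendsto (fun h : ℝ => (g (t + h) - g t) / h)
    (nhdsWithin 0 (Set.Ioi 0)) (nhds s)

/-- `g` has outgoing slope `s` at `t` in the decreasing direction. -/
def HasLeftSlope (g : ℝ → ℝ) (t s : ℝ) : Prop :=
  Filter.Tendsto (fun h : ℝ => (g (t - h) - g t) / h)
    (nhdsWithin 0 (Set.Ioi 0)) (nhds s)

namespace LooplessMetricGraph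

variable (G : LooplessMetricGraph)

/-- `f` is a tropical rational function on `Γ`: a continuous piecewise affine
real-valued function with integer slopes. -/
def IsTropicalRational (f : G.Point → ℝ) : Prop :=
  ∀ e : G.E, PwIntAffineOn (G.edgeFun f e) 0 (G.len e)

/-- The sum of the outgoing slopes of `f` at the point `p` of `Γ` equals `c`. -/
def OutSlopeSum (f : G.Point → ℝ) (p : G.Point) (c : ℝ) : Prop :=
  match p with
  | Sum.inl v => ∃ sOut sIn : G.E → ℝ,
      (∀ e, G.src e = v → HasRightSlope (G.edgeFun f e) 0 (sOut e)) ∧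
      (∀ e, G.dst e = v → HasLeftSlope (G.edgeFun f e) (G.len e) (sIn e)) ∧
      (∑ e ∈ Finset.univ.filter fun e => G.src e = v, sOut e) +
        (∑ e ∈ Finset.univ.filter fun e => G.dst e = v, sIn e) = c
  | Sum.inr q => ∃ sr sl : ℝ,
      HasRightSlope (G.edgeFun f q.1) q.2.1 sr ∧
      HasLeftSlope (G.edgeFun f q.1) q.2.1 sl ∧ sr + sl = c

/-- `div(f) = D`: `f` is a tropical rational function on `Γ` and, at every
point `p` of `Γ`, the sum of the incoming slopes of `f` (that is, minus the
sum of the outgoing slopes) equals `D p`. -/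
def HasDivisor (f : G.Point → ℝ) (D : G.Point → ℤ) : Prop :=
  G.IsTropicalRational f ∧ ∀ p, G.OutSlopeSum f p (-(D p : ℝ))

end LooplessMetricGraph


/-- A chain of bridge edges in the metric graph: a path with successive
distinct vertices `w₀, …, w_n` and edges `b₁, …, b_n`, all of which are
bridges. -/
structure LooplessMetricGraph.BridgeChain (G : LooplessMetricGraph) where
  n : ℕ
  n_pos : 0 < n
  w : Fin (n + 1) → G.V
  w_inj : Function.Injective w
  b : Fin n → G.E
  b_inj : Function.Injective b
  joins : ∀ i : Fin n,
    (G.src (b i) = w i.castSucc ∧ G.dst (b i) = w i.succ) ∨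
      (G.src (b i) = w i.succ ∧ G.dst (b i) = w i.castSucc)
  bridges : ∀ i, G.IsBridge (b i)

namespace LooplessMetricGraph

variable {G : LooplessMetricGraph}

/-- A chain of bridges is maximal if it cannot be extended: every bridge
adjacent to one of its two endpoints already belongs to the chain. -/
def BridgeChain.IsMaximal (B : G.BridgeChain) : Prop :=
  ∀ e : G.E, G.IsBridge e →
    (G.src e = B.w 0 ∨ G.dst e = B.w 0 ∨
      G.src e = B.w (Fin.last B.n) ∨ G.dst e = B.w (Fin.last B.n)) →
    e ∈ Set.range B.b

/-- The set of points of `Γ` lying on (the closed edges of) the chain. -/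
def BridgeChain.points (B : G.BridgeChain) : Set G.Point :=
  ⋃ i : Fin B.n, G.onEdge (B.b i)

end LooplessMetricGraph

section SlopeLemmas

lemma hasRightSlope_unique {g : ℝ → ℝ} {t a b : ℝ}
    (ha : HasRightSlope g t a) (hb : HasRightSlope g t b) : a = b :=
  tendsto_nhds_unique ha hb

lemma hasLeftSlope_unique {g : ℝ → ℝ} {t a b : ℝ}
    (ha : HasLeftSlope g t a) (hb : HasLeftSlope g t b) : a = b :=
  tendsto_nhds_unique ha hb

lemma hasRightSlope_of_affine {g : ℝ → ℝ} {t u s c : ℝ} (htu : t < u)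
    (hg : ∀ x ∈ Set.Icc t u, g x = s * x + c) : HasRightSlope g t s := by
  have h1 : ∀ h ∈ Set.Ioo (0:ℝ) (u - t), (g (t + h) - g t) / h = s := by
    intro h hh
    have e1 : g (t + h) = s * (t + h) + c :=
      hg _ ⟨by linarith [hh.1], by linarith [hh.2]⟩
    have e2 : g t = s * t + c := hg _ ⟨le_rfl, htu.le⟩
    rw [e1, e2, div_eq_iff (ne_of_gt hh.1)]; ring
  have hmem : Set.Ioo (0:ℝ) (u - t) ∈ nhdsWithin (0:ℝ) (Set.Ioi 0) :=
    Ioo_mem_nhdsGT_of_mem ⟨le_rfl, by linarith⟩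
  exact Filter.Tendsto.congr'
    (Filter.eventuallyEq_of_mem hmem fun h hh => (h1 h hh).symm) tendsto_const_nhds

lemma hasLeftSlope_of_affine {g : ℝ → ℝ} {u t s c : ℝ} (hut : u < t)
    (hg : ∀ x ∈ Set.Icc u t, g x = s * x + c) : HasLeftSlope g t (-s) := by
  have h1 : ∀ h ∈ Set.Ioo (0:ℝ) (t - u), (g (t - h) - g t) / h = -s := by
    intro h hh
    have e1 : g (t - h) = s * (t - h) + c :=
      hg _ ⟨by linarith [hh.2], by linarith [hh.1]⟩
    have e2 : g t = s * t + c := hg _ ⟨hut.le, le_rfl⟩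
    rw [e1, e2, div_eq_iff (ne_of_gt hh.1)]; ring
  have hmem : Set.Ioo (0:ℝ) (t - u) ∈ nhdsWithin (0:ℝ) (Set.Ioi 0) :=
    Ioo_mem_nhdsGT_of_mem ⟨le_rfl, by linarith⟩
  exact Filter.Tendsto.congr'
    (Filter.eventuallyEq_of_mem hmem fun h hh => (h1 h hh).symm) tendsto_const_nhds

lemma exists_right_piece {g : ℝ → ℝ} {L : ℝ} (hg : PwIntAffineOn g 0 L)
    {x : ℝ} (hx0 : 0 ≤ x) (hxL : x < L) :
    ∃ (s : ℤ) (u : ℝ), x < u ∧ u ≤ L ∧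
      (∀ y ∈ Set.Icc x u, g y = (s : ℝ) * y + (g x - s * x)) ∧
      HasRightSlope g x (s : ℝ) := by
  obtain ⟨n, t, sl, c, h0, hL, hmono, haff⟩ := hg
  have hA : (Finset.univ.filter fun i : Fin (n+1) => t i ≤ x).Nonempty :=
    ⟨0, by simp [h0, hx0]⟩
  set i := (Finset.univ.filter fun i : Fin (n+1) => t i ≤ x).max' hA with hi
  have hix : t i ≤ x := by
    have := Finset.max'_mem _ hA
    rw [← hi] at this
    simpa using this
  have hine : i ≠ Fin.last n := by
    intro h
    rw [h, hL] at hix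
    exact absurd hix (not_le.2 hxL)
  have hlt : (i : ℕ) < n := by
    rcases lt_or_eq_of_le (Nat.lt_succ_iff.1 i.isLt) with h | h
    · exact h
    · exact absurd (Fin.ext h : i = Fin.last n) hine
  set j : Fin n := ⟨i, hlt⟩ with hj
  have hcs : j.castSucc = i := rfl
  have hsucc : x < t j.succ := by
    by_contra hcon
    push_neg at hcon
    have hmem : j.succ ∈ Finset.univ.filter fun i : Fin (n+1) => t i ≤ x := by
      simp [hcon]
    have hle := Finset.le_max' _ _ hmem
    rw [← hi] at hle
    have : j.castSucc < j.succ := Fin.castSucc_lt_succ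
    rw [hcs] at this
    exact absurd (lt_of_lt_of_le this hle) (lt_irrefl _)
  refine ⟨sl j, t j.succ, hsucc, ?_, ?_, ?_⟩
  · rw [← hL]; exact hmono (Fin.le_last _)
  · intro y hy
    have hxmem : x ∈ Set.Icc (t j.castSucc) (t j.succ) := ⟨by rw [hcs]; exact hix, hsucc.le⟩
    have hymem : y ∈ Set.Icc (t j.castSucc) (t j.succ) :=
      ⟨le_trans hxmem.1 hy.1, hy.2⟩
    have e1 := haff j y hymem
    have e2 := haff j x hxmem
    rw [e1, e2]; ring
  · refine hasRightSlope_of_affine (c := c j) hsucc ?_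
    intro y hy
    have hxmem : x ∈ Set.Icc (t j.castSucc) (t j.succ) := ⟨by rw [hcs]; exact hix, hsucc.le⟩
    exact haff j y ⟨le_trans hxmem.1 hy.1, hy.2⟩

end SlopeLemmas
section SlopeLemmas2

lemma exists_left_piece {g : ℝ → ℝ} {L : ℝ} (hg : PwIntAffineOn g 0 L)
    {x : ℝ} (hx0 : 0 < x) (hxL : x ≤ L) :
    ∃ (s : ℤ) (u : ℝ), 0 ≤ u ∧ u < x ∧
      (∀ y ∈ Set.Icc u x, g y = (s : ℝ) * y + (g x - s * x)) ∧
      HasLeftSlope g x (-(s : ℝ)) := by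
  obtain ⟨n, t, sl, c, h0, hL, hmono, haff⟩ := hg
  have hA : (Finset.univ.filter fun i : Fin (n+1) => x ≤ t i).Nonempty :=
    ⟨Fin.last n, by simp [hL, hxL]⟩
  set i := (Finset.univ.filter fun i : Fin (n+1) => x ≤ t i).min' hA with hi
  have hix : x ≤ t i := by
    have := Finset.min'_mem _ hA
    rw [← hi] at this
    simpa using this
  have hine : i ≠ 0 := by
    intro h
    rw [h, h0] at hix
    exact absurd hix (not_le.2 hx0)
  have hpos : 0 < (i : ℕ) := Nat.pos_of_ne_zero (fun h => hine (Fin.ext h))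
  have hlt : (i : ℕ) - 1 < n := by
    have := i.isLt
    omega
  set j : Fin n := ⟨(i : ℕ) - 1, hlt⟩ with hj
  have hsu : j.succ = i := by
    apply Fin.ext
    show (i:ℕ) - 1 + 1 = (i:ℕ)
    omega
  have hcs : x ≤ t j.succ := by rw [hsu]; exact hix
  have hcslt : t j.castSucc < x := by
    by_contra hcon
    push_neg at hcon
    have hmem : j.castSucc ∈ Finset.univ.filter fun i : Fin (n+1) => x ≤ t i := by
      simp [hcon]
    have hle := Finset.min'_le _ _ hmem
    rw [← hi] at hle
    have hlt2 : j.castSucc < j.succ := Fin.castSucc_lt_succ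
    rw [hsu] at hlt2
    exact absurd (lt_of_le_of_lt hle hlt2) (lt_irrefl _)
  have hxmem : x ∈ Set.Icc (t j.castSucc) (t j.succ) := ⟨hcslt.le, hcs⟩
  refine ⟨sl j, t j.castSucc, ?_, hcslt, ?_, ?_⟩
  · rw [← h0]; exact hmono (Fin.zero_le _)
  · intro y hy
    have hymem : y ∈ Set.Icc (t j.castSucc) (t j.succ) := ⟨hy.1, le_trans hy.2 hcs⟩
    have e1 := haff j y hymem
    have e2 := haff j x hxmem
    rw [e1, e2]; ring
  · refine hasLeftSlope_of_affine (c := c j) hcslt ?_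
    intro y hy
    exact haff j y ⟨hy.1, le_trans hy.2 hcs⟩

lemma pw_exists_min {g : ℝ → ℝ} {L : ℝ} (hg : PwIntAffineOn g 0 L) :
    ∃ m : ℝ, (∀ x ∈ Set.Icc 0 L, m ≤ g x) ∧ ∃ x ∈ Set.Icc (0:ℝ) L, g x = m := by
  obtain ⟨n, t, sl, c, h0, hL, hmono, haff⟩ := hg
  set m := Finset.univ.inf' (Finset.univ_nonempty (α := Fin (n+1))) (fun i => g (t i)) with hm
  have hle : ∀ i : Fin (n+1), m ≤ g (t i) := fun i =>
    Finset.inf'_le _ (Finset.mem_univ i)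
  have key : ∀ i : Fin (n+1), ∀ x, 0 ≤ x → x ≤ t i → m ≤ g x := by
    intro i
    induction i using Fin.induction with
    | zero =>
      intro x hx0 hx1
      rw [h0] at hx1
      have : x = 0 := le_antisymm hx1 hx0
      rw [this, ← h0]
      exact hle 0
    | succ k ih =>
      intro x hx0 hx1
      rcases le_or_gt x (t k.castSucc) with h | h
      · exact ih x hx0 h
      · have hxmem : x ∈ Set.Icc (t k.castSucc) (t k.succ) := ⟨h.le, hx1⟩
        have hts : t k.castSucc ≤ t k.succ := hmono (Fin.castSucc_le_succ k)
        have e1 := haff k x hxmem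
        have e2 := haff k (t k.castSucc) (Set.left_mem_Icc.2 hts)
        have e3 := haff k (t k.succ) (Set.right_mem_Icc.2 hts)
        have b2 := hle k.castSucc
        have b3 := hle k.succ
        rw [e2] at b2
        rw [e3] at b3
        rw [e1]
        rcases le_or_gt 0 ((sl k : ℝ)) with hs | hs
        · nlinarith [mul_le_mul_of_nonneg_left hxmem.1 hs]
        · nlinarith [mul_le_mul_of_nonpos_left hxmem.2 hs.le]
  refine ⟨m, ?_, ?_⟩
  · intro x hx
    exact key (Fin.last n) x hx.1 (by rw [hL]; exact hx.2)
  · obtain ⟨i, _, hi⟩ := Finset.exists_mem_eq_inf' (Finset.univ_nonempty (α := Fin (n+1))) (fun i => g (t i))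
    refine ⟨t i, ⟨by rw [← h0]; exact hmono (Fin.zero_le _), by rw [← hL]; exact hmono (Fin.le_last _)⟩, ?_⟩
    rw [hm, hi]

end SlopeLemmas2
namespace LooplessMetricGraph

variable {G : LooplessMetricGraph}

lemma Step.symm {S : Set G.E} {v w : G.V} (h : G.Step S v w) : G.Step S w v := by
  obtain ⟨e, he, h1 | h2⟩ := h
  · exact ⟨e, he, Or.inr h1⟩
  · exact ⟨e, he, Or.inl h2⟩

lemma reaches_refl {S : Set G.E} {v : G.V} : G.Reaches S v v :=
  Relation.ReflTransGen.refl

lemma reaches_symm {S : Set G.E} {v w : G.V} (h : G.Reaches S v w) : G.Reaches S w v := by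
  induction h with
  | refl => exact Relation.ReflTransGen.refl
  | tail _ h2 ih =>
    exact Relation.ReflTransGen.trans (Relation.ReflTransGen.single h2.symm) ih

lemma reaches_trans {S : Set G.E} {u v w : G.V} (h1 : G.Reaches S u v)
    (h2 : G.Reaches S v w) : G.Reaches S u w :=
  Relation.ReflTransGen.trans h1 h2

lemma reaches_of_step_reaches {A B : Set G.E} {v w : G.V}
    (hstep : ∀ a b, G.Step A a b → G.Reaches B a b) (h : G.Reaches A v w) :
    G.Reaches B v w := by
  induction h with
  | refl => exact Relation.ReflTransGen.refl
  | tail _ h2 ih => exact reaches_trans ih (hstep _ _ h2)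

lemma reaches_mono {A B : Set G.E} (hAB : A ⊆ B) {v w : G.V}
    (h : G.Reaches A v w) : G.Reaches B v w := by
  refine reaches_of_step_reaches (fun a b hs => ?_) h
  obtain ⟨e, he, hor⟩ := hs
  exact Relation.ReflTransGen.single ⟨e, hAB he, hor⟩

lemma spanning_detour {A : Set G.E} {e : G.E} (hA : G.SpanningConnected A)
    (hdet : G.Reaches (A \ {e}) (G.src e) (G.dst e)) :
    G.SpanningConnected (A \ {e}) := by
  intro v w
  refine reaches_of_step_reaches (fun a b hs => ?_) (hA v w)
  obtain ⟨e', he', hor⟩ := hs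
  by_cases hee : e' = e
  · subst hee
    rcases hor with ⟨h1, h2⟩ | ⟨h1, h2⟩
    · rw [← h1, ← h2]; exact hdet
    · rw [← h1, ← h2]; exact reaches_symm hdet
  · exact Relation.ReflTransGen.single ⟨e', ⟨he', hee⟩, hor⟩

lemma tree_no_detour {T : Set G.E} (hT : G.IsSpanningTree T) {e : G.E} (he : e ∈ T) :
    ¬ G.Reaches (T \ {e}) (G.src e) (G.dst e) :=
  fun h => hT.2 e he (spanning_detour hT.1 h)

lemma bridge_no_detour (hconn : G.Connected) {e : G.E} (hbr : G.IsBridge e) :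
    ¬ G.Reaches (Set.univ \ {e}) (G.src e) (G.dst e) :=
  fun h => hbr (spanning_detour hconn h)

lemma bridge_mem_tree {T : Set G.E} (hT : G.IsSpanningTree T) {e : G.E}
    (hbr : G.IsBridge e) : e ∈ T := by
  by_contra h
  apply hbr
  intro v w
  refine reaches_mono ?_ (hT.1 v w)
  intro e' he'
  exact ⟨Set.mem_univ _, fun hh => h ((Set.mem_singleton_iff.1 hh) ▸ he')⟩

/-- The number of incidences of edges of `S` at the vertex `v`. -/
def degF (G : LooplessMetricGraph) (S : Finset G.E) (v : G.V) : ℕ :=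
  (S.filter fun e => G.src e = v).card + (S.filter fun e => G.dst e = v).card

lemma degF_mono {S S' : Finset G.E} (h : S' ⊆ S) (v : G.V) :
    G.degF S' v ≤ G.degF S v :=
  Nat.add_le_add (Finset.card_le_card (Finset.filter_subset_filter _ h))
    (Finset.card_le_card (Finset.filter_subset_filter _ h))

lemma one_le_degF {S : Finset G.E} {e : G.E} (he : e ∈ S) {v : G.V}
    (hv : G.src e = v ∨ G.dst e = v) : 1 ≤ G.degF S v := by
  unfold degF
  rcases hv with h | h
  · have : e ∈ S.filter fun e => G.src e = v := Finset.mem_filter.2 ⟨he, h⟩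
    have := Finset.card_pos.2 ⟨e, this⟩
    omega
  · have : e ∈ S.filter fun e => G.dst e = v := Finset.mem_filter.2 ⟨he, h⟩
    have := Finset.card_pos.2 ⟨e, this⟩
    omega

lemma exists_incident {S : Finset G.E} {v : G.V} (h : 1 ≤ G.degF S v) :
    ∃ e ∈ S, G.src e = v ∨ G.dst e = v := by
  unfold degF at h
  rcases Nat.lt_or_ge 0 (S.filter fun e => G.src e = v).card with h1 | h1
  · obtain ⟨e, he⟩ := Finset.card_pos.1 h1
    rw [Finset.mem_filter] at he
    exact ⟨e, he.1, Or.inl he.2⟩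
  · have h2 : 0 < (S.filter fun e => G.dst e = v).card := by omega
    obtain ⟨e, he⟩ := Finset.card_pos.1 h2
    rw [Finset.mem_filter] at he
    exact ⟨e, he.1, Or.inr he.2⟩

lemma two_le_degF {S : Finset G.E} {e₁ e₂ : G.E} (h1 : e₁ ∈ S) (h2 : e₂ ∈ S)
    (hne : e₁ ≠ e₂) {v : G.V} (hv1 : G.src e₁ = v ∨ G.dst e₁ = v)
    (hv2 : G.src e₂ = v ∨ G.dst e₂ = v) : 2 ≤ G.degF S v := by
  have hm : ∀ e ∈ S, (G.src e = v ∨ G.dst e = v) →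
      e ∈ (S.filter fun e => G.src e = v) ∪ (S.filter fun e => G.dst e = v) := by
    intro e he hv
    rcases hv with h | h
    · exact Finset.mem_union_left _ (Finset.mem_filter.2 ⟨he, h⟩)
    · exact Finset.mem_union_right _ (Finset.mem_filter.2 ⟨he, h⟩)
  have hsub : {e₁, e₂} ⊆ (S.filter fun e => G.src e = v) ∪ (S.filter fun e => G.dst e = v) := by
    intro e he
    rcases Finset.mem_insert.1 he with h | h
    · exact h ▸ hm e₁ h1 hv1
    · exact (Finset.mem_singleton.1 h) ▸ hm e₂ h2 hv2
  have hcard : 2 ≤ ((S.filter fun e => G.src e = v) ∪ (S.filter fun e => G.dst e = v)).card := by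
    calc 2 = ({e₁, e₂} : Finset G.E).card := (Finset.card_pair hne).symm
    _ ≤ _ := Finset.card_le_card hsub
  calc 2 ≤ _ := hcard
  _ ≤ G.degF S v := Finset.card_union_le _ _

lemma exists_second {S : Finset G.E} {v : G.V} {e₀ : G.E} (hdeg : 2 ≤ G.degF S v) :
    ∃ e₁ ∈ S, e₁ ≠ e₀ ∧ (G.src e₁ = v ∨ G.dst e₁ = v) := by
  by_contra h
  push_neg at h
  have hsub : ∀ e ∈ S, (G.src e = v ∨ G.dst e = v) → e = e₀ := by
    intro e he hv
    by_contra hne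
    rcases hv with hv | hv
    · exact (h e he hne).1 hv
    · exact (h e he hne).2 hv
  have hA : (S.filter fun e => G.src e = v) ⊆ {e₀} := by
    intro e he
    rw [Finset.mem_filter] at he
    exact Finset.mem_singleton.2 (hsub e he.1 (Or.inl he.2))
  have hB : (S.filter fun e => G.dst e = v) ⊆ {e₀} := by
    intro e he
    rw [Finset.mem_filter] at he
    exact Finset.mem_singleton.2 (hsub e he.1 (Or.inr he.2))
  have hcA := Finset.card_le_card hA
  have hcB := Finset.card_le_card hB
  rw [Finset.card_singleton] at hcA hcB
  unfold degF at hdeg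
  have hcA1 : (S.filter fun e => G.src e = v).card = 1 := by omega
  have hcB1 : (S.filter fun e => G.dst e = v).card = 1 := by omega
  obtain ⟨eA, heA⟩ := Finset.card_pos.1 (by omega : 0 < (S.filter fun e => G.src e = v).card)
  obtain ⟨eB, heB⟩ := Finset.card_pos.1 (by omega : 0 < (S.filter fun e => G.dst e = v).card)
  have h1 := Finset.mem_singleton.1 (hA heA)
  have h2 := Finset.mem_singleton.1 (hB heB)
  rw [Finset.mem_filter] at heA heB
  apply G.no_loops e₀
  have hA2 : G.src e₀ = v := by rw [← h1]; exact heA.2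
  have hB2 : G.dst e₀ = v := by rw [← h2]; exact heB.2
  rw [hA2, hB2]

lemma degF_eq_of_mem_iff {S S' : Finset G.E} {v : G.V}
    (hsub : S' ⊆ S)
    (h : ∀ e ∈ S, (G.src e = v ∨ G.dst e = v) → e ∈ S') :
    G.degF S' v = G.degF S v := by
  have h1 : S'.filter (fun e => G.src e = v) = S.filter (fun e => G.src e = v) := by
    apply Finset.ext
    intro e
    simp only [Finset.mem_filter]
    exact ⟨fun ⟨he, hs⟩ => ⟨hsub he, hs⟩, fun ⟨he, hs⟩ => ⟨h e he (Or.inl hs), hs⟩⟩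
  have h2 : S'.filter (fun e => G.dst e = v) = S.filter (fun e => G.dst e = v) := by
    apply Finset.ext
    intro e
    simp only [Finset.mem_filter]
    exact ⟨fun ⟨he, hs⟩ => ⟨hsub he, hs⟩, fun ⟨he, hs⟩ => ⟨h e he (Or.inr hs), hs⟩⟩
  unfold degF
  rw [h1, h2]

/-- **Descent lemma**: a nonempty forest (finite set of edges inside a spanning
tree) has at least two vertices of degree one: there is no nonempty `S ⊆ T`
having at most one vertex of degree `1`. -/
lemma descent {T : Set G.E} (hT : G.IsSpanningTree T) :
    ∀ (k : ℕ) (S : Finset G.E), S.card ≤ k → ↑S ⊆ T →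
      (∃ y0 : G.V, ∀ v : G.V, v ≠ y0 → G.degF S v = 0 ∨ 2 ≤ G.degF S v) →
      S = ∅ := by
  intro k
  induction k with
  | zero =>
    intro S hcard _ _
    exact Finset.card_eq_zero.1 (Nat.le_zero.1 hcard)
  | succ k ih =>
    rintro S hcard hsub ⟨y0, hdeg⟩
    by_contra hne
    obtain ⟨ea, hea⟩ := Finset.nonempty_iff_ne_empty.2 hne
    obtain ⟨e₀, he₀, x, z, hor, hxy⟩ :
        ∃ e₀, e₀ ∈ S ∧ ∃ x z,
          ((G.src e₀ = x ∧ G.dst e₀ = z) ∨ (G.src e₀ = z ∧ G.dst e₀ = x)) ∧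
          (x = y0 ∨ G.degF S y0 = 0) := by
      by_cases hy : 1 ≤ G.degF S y0
      · obtain ⟨e, he, hinc⟩ := exists_incident hy
        rcases hinc with h | h
        · exact ⟨e, he, y0, G.dst e, Or.inl ⟨h, rfl⟩, Or.inl rfl⟩
        · exact ⟨e, he, y0, G.src e, Or.inr ⟨rfl, h⟩, Or.inl rfl⟩
      · exact ⟨ea, hea, G.src ea, G.dst ea, Or.inl ⟨rfl, rfl⟩, Or.inr (by omega)⟩
    have hxz : x ≠ z := by
      rcases hor with ⟨h1, h2⟩ | ⟨h1, h2⟩ <;>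
        exact fun hh => G.no_loops e₀ (by rw [h1, h2, hh])
    have hincx : G.src e₀ = x ∨ G.dst e₀ = x := by
      rcases hor with ⟨h1, _⟩ | ⟨_, h2⟩
      exacts [Or.inl h1, Or.inr h2]
    have hincz : G.src e₀ = z ∨ G.dst e₀ = z := by
      rcases hor with ⟨_, h2⟩ | ⟨h1, _⟩
      exacts [Or.inr h2, Or.inl h1]
    have hzy : z ≠ y0 := by
      rcases hxy with h | h
      · rw [← h]; exact fun hh => hxz hh.symm
      · intro hh
        have := one_le_degF he₀ (hh ▸ hincz)
        omega
    have hnotRx : ¬ G.Reaches (T \ {e₀}) z x := by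
      intro hr
      apply tree_no_detour hT (hsub (Finset.mem_coe.2 he₀))
      rcases hor with ⟨h1, h2⟩ | ⟨h1, h2⟩
      · rw [h1, h2]; exact reaches_symm hr
      · rw [h1, h2]; exact hr
    have hdegz : 2 ≤ G.degF S z := by
      rcases hdeg z hzy with h | h
      · have := one_le_degF he₀ hincz
        omega
      · exact h
    have hiff : ∀ e ∈ S, e ≠ e₀ →
        (G.Reaches (T \ {e₀}) z (G.src e) ↔ G.Reaches (T \ {e₀}) z (G.dst e)) := by
      intro e he hne'
      have hstep : G.Step (T \ {e₀}) (G.src e) (G.dst e) :=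
        ⟨e, ⟨hsub (Finset.mem_coe.2 he), fun hh => hne' (Set.mem_singleton_iff.1 hh)⟩,
          Or.inl ⟨rfl, rfl⟩⟩
      constructor
      · intro h; exact reaches_trans h (Relation.ReflTransGen.single hstep)
      · intro h; exact reaches_trans h (Relation.ReflTransGen.single hstep.symm)
    classical
    set S' := S.filter (fun e => e ≠ e₀ ∧ G.Reaches (T \ {e₀}) z (G.src e)) with hS'def
    have hS'sub : S' ⊆ S := Finset.filter_subset _ _
    have hS'mem : ∀ e, e ∈ S' ↔ e ∈ S ∧ e ≠ e₀ ∧ G.Reaches (T \ {e₀}) z (G.src e) := by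
      intro e
      rw [hS'def, Finset.mem_filter]
    obtain ⟨e₁, he₁S, he₁ne, he₁inc⟩ := exists_second (e₀ := e₀) hdegz
    have he₁' : e₁ ∈ S' := by
      rw [hS'mem]
      refine ⟨he₁S, he₁ne, ?_⟩
      rcases he₁inc with h | h
      · rw [h]; exact reaches_refl
      · exact (hiff e₁ he₁S he₁ne).2 (h ▸ reaches_refl)
    have hdeg' : ∀ v : G.V, v ≠ z → G.degF S' v = 0 ∨ 2 ≤ G.degF S' v := by
      intro v hvz
      by_cases h0 : G.degF S' v = 0
      · exact Or.inl h0
      right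
      have h1 : 1 ≤ G.degF S' v := by omega
      obtain ⟨e, he, hinc⟩ := exists_incident h1
      obtain ⟨heS, hene, hesrc⟩ := (hS'mem e).1 he
      have hRzv : G.Reaches (T \ {e₀}) z v := by
        rcases hinc with h | h
        · exact h ▸ hesrc
        · exact h ▸ ((hiff e heS hene).1 hesrc)
      have hvx : v ≠ x := fun hh => hnotRx (hh ▸ hRzv)
      have hall : ∀ e' ∈ S, (G.src e' = v ∨ G.dst e' = v) →
          (e' ≠ e₀ ∧ G.Reaches (T \ {e₀}) z (G.src e')) := by
        intro e' he' hinc'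
        have hne' : e' ≠ e₀ := by
          intro hh
          subst hh
          have hxorz : v = x ∨ v = z := by
            rcases hor with ⟨h1, h2⟩ | ⟨h1, h2⟩ <;> rcases hinc' with h | h
            · exact Or.inl (h1.symm.trans h).symm
            · exact Or.inr (h2.symm.trans h).symm
            · exact Or.inr (h1.symm.trans h).symm
            · exact Or.inl (h2.symm.trans h).symm
          rcases hxorz with h | h
          · exact hvx h
          · exact hvz h
        refine ⟨hne', ?_⟩
        rcases hinc' with h | h
        · exact h ▸ hRzv
        · exact (hiff e' he' hne').2 (h ▸ hRzv)
      have heq : G.degF S' v = G.degF S v :=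
        degF_eq_of_mem_iff hS'sub
          (fun e' he' hinc' => (hS'mem e').2 ⟨he', hall e' he' hinc'⟩)
      have hvy : v ≠ y0 := by
        rcases hxy with h | h
        · rw [← h]; exact hvx
        · intro hh
          have hge : 1 ≤ G.degF S v := heq ▸ h1
          rw [hh] at hge
          omega
      rcases hdeg v hvy with h | h
      · rw [heq] at h1; omega
      · rw [heq]; exact h
    have hcard' : S'.card ≤ k := by
      have hsubE : S' ⊆ S.erase e₀ := by
        intro e he
        obtain ⟨heS, hene, _⟩ := (hS'mem e).1 he
        exact Finset.mem_erase.2 ⟨hene, heS⟩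
      have h2 := Finset.card_le_card hsubE
      have h3 := Finset.card_erase_of_mem he₀
      omega
    have hS'T : ↑S' ⊆ T := fun e he => hsub (Finset.mem_coe.2 (hS'sub (Finset.mem_coe.1 he)))
    have hfin := ih S' hcard' hS'T ⟨z, hdeg'⟩
    rw [hfin] at he₁'
    exact absurd he₁' (Finset.notMem_empty _)

end LooplessMetricGraph
section ConstLemma

/-- If a piecewise affine function on `[0, L]` attains its global minimum `μ`
at an interior point, and at every interior point the sum of the two outgoing
slopes is nonpositive, then the function is identically `μ` on `[0, L]`. -/
lemma const_of_interior_min {g : ℝ → ℝ} {L μ : ℝ}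
    (hpw : PwIntAffineOn g 0 L)
    (hmin : ∀ x ∈ Set.Icc 0 L, μ ≤ g x)
    (hslope : ∀ x, 0 < x → x < L → ∃ sr sl : ℝ,
        HasRightSlope g x sr ∧ HasLeftSlope g x sl ∧ sr + sl ≤ 0)
    {t0 : ℝ} (ht0 : 0 < t0) (ht0L : t0 < L) (hgt0 : g t0 = μ) :
    ∀ x ∈ Set.Icc 0 L, g x = μ := by
  have hL : 0 < L := lt_trans ht0 ht0L
  -- local constancy at interior minimum points
  have localc : ∀ x, 0 < x → x < L → g x = μ →
      ∃ u u', 0 ≤ u' ∧ u' < x ∧ x < u ∧ u ≤ L ∧ ∀ y ∈ Set.Icc u' u, g y = μ := by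
    intro x hx0 hxL hgx
    obtain ⟨s, u, hxu, huL, haffR, hRS⟩ := exists_right_piece hpw hx0.le hxL
    obtain ⟨s', u', hu'0, hu'x, haffL, hLS⟩ := exists_left_piece hpw hx0 hxL.le
    obtain ⟨sr, sl, hsr, hsl, hsum⟩ := hslope x hx0 hxL
    have hsrs : sr = (s : ℝ) := hasRightSlope_unique hsr hRS
    have hsls : sl = -(s' : ℝ) := hasLeftSlope_unique hsl hLS
    have hgu : μ ≤ g u := hmin u ⟨le_trans hx0.le hxu.le, huL⟩
    have hgu' : μ ≤ g u' := hmin u' ⟨hu'0, le_trans hu'x.le hxL.le⟩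
    have hau : g u = (s : ℝ) * u + (g x - s * x) := haffR u ⟨hxu.le, le_rfl⟩
    have hau' : g u' = (s' : ℝ) * u' + (g x - s' * x) := haffL u' ⟨le_rfl, hu'x.le⟩
    have hs0 : (0 : ℝ) ≤ s := by nlinarith [hgu, hau, hgx]
    have hs'0 : (s' : ℝ) ≤ 0 := by nlinarith [hgu', hau', hgx]
    have hsum' : (s : ℝ) - s' ≤ 0 := by
      rw [hsrs, hsls] at hsum; linarith
    have hseq : (s : ℝ) = 0 := le_antisymm (by linarith) hs0
    have hs'eq : (s' : ℝ) = 0 := le_antisymm hs'0 (by linarith)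
    refine ⟨u, u', hu'0, hu'x, hxu, huL, ?_⟩
    intro y hy
    rcases le_or_gt y x with h | h
    · have := haffL y ⟨hy.1, h⟩
      rw [this, hs'eq, hgx]; ring
    · have := haffR y ⟨h.le, hy.2⟩
      rw [this, hseq, hgx]; ring
  -- rightward propagation
  have right : ∀ y ∈ Set.Icc t0 L, g y = μ := by
    set A := {x | x ∈ Set.Icc t0 L ∧ ∀ y ∈ Set.Icc t0 x, g y = μ} with hA
    have hA0 : t0 ∈ A := by
      refine ⟨⟨le_rfl, ht0L.le⟩, fun y hy => ?_⟩
      have : y = t0 := le_antisymm hy.2 hy.1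
      rw [this, hgt0]
    have hAne : A.Nonempty := ⟨t0, hA0⟩
    have hAbdd : BddAbove A := ⟨L, fun x hx => hx.1.2⟩
    set r := sSup A with hr
    have hr1 : t0 ≤ r := le_csSup hAbdd hA0
    have hr2 : r ≤ L := csSup_le hAne (fun x hx => hx.1.2)
    have claim1 : ∀ y, t0 ≤ y → y < r → g y = μ := by
      intro y hy1 hy2
      obtain ⟨x, hxA, hyx⟩ := exists_lt_of_lt_csSup hAne hy2
      exact hxA.2 y ⟨hy1, hyx.le⟩
    have claim2 : g r = μ := by
      rcases eq_or_lt_of_le hr1 with h | h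
      · rw [← h, hgt0]
      · have hrpos : 0 < r := lt_trans ht0 h
        obtain ⟨s', u', hu'0, hu'r, haffL, _⟩ := exists_left_piece hpw hrpos hr2
        set y1 := max u' t0 with hy1
        have hy1r : y1 < r := max_lt hu'r h
        set y2 := (y1 + r)/2 with hy2
        have hy12 : y1 < y2 := by rw [hy2]; linarith
        have hy2r : y2 < r := by rw [hy2]; linarith
        have hg1 : g y1 = μ := claim1 y1 (le_max_right _ _) hy1r
        have hg2 : g y2 = μ := claim1 y2 (le_trans (le_max_right _ _) hy12.le) hy2r
        have ha1 : g y1 = (s' : ℝ) * y1 + (g r - s' * r) :=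
          haffL y1 ⟨le_max_left _ _, hy1r.le⟩
        have ha2 : g y2 = (s' : ℝ) * y2 + (g r - s' * r) :=
          haffL y2 ⟨le_trans (le_max_left _ _) hy12.le, hy2r.le⟩
        have hs'0 : (s' : ℝ) = 0 := by
          have h12 : (s' : ℝ) * y1 = (s' : ℝ) * y2 := by
            have e1 : (s' : ℝ) * y1 + (g r - s' * r) = μ := by rw [← ha1]; exact hg1
            have e2 : (s' : ℝ) * y2 + (g r - s' * r) = μ := by rw [← ha2]; exact hg2
            linarith
          by_contra hne
          exact absurd (mul_left_cancel₀ hne h12) (ne_of_lt hy12)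
        rw [ha1, hs'0] at hg1
        linarith [hg1]
    have claim3 : r = L := by
      by_contra hcon
      have hrL : r < L := lt_of_le_of_ne hr2 hcon
      have hrpos : 0 < r := lt_of_lt_of_le ht0 hr1
      obtain ⟨u, u', hu'0, hu'r, hru, huL, hconst⟩ := localc r hrpos hrL claim2
      have huA : u ∈ A := by
        refine ⟨⟨le_trans hr1 hru.le, huL⟩, fun y hy => ?_⟩
        rcases le_or_gt y r with h | h
        · rcases lt_or_eq_of_le h with h' | h'
          · exact claim1 y hy.1 h'
          · rw [h']; exact claim2
        · exact hconst y ⟨le_trans hu'r.le h.le, hy.2⟩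
      have := le_csSup hAbdd huA
      rw [← hr] at this
      exact absurd this (not_le.2 hru)
    intro y hy
    rcases lt_or_eq_of_le hy.2 with h | h
    · exact claim1 y hy.1 (by rw [claim3]; exact h)
    · rw [h, ← claim3]; exact claim2
  -- leftward propagation
  have left : ∀ y ∈ Set.Icc 0 t0, g y = μ := by
    set A := {x | x ∈ Set.Icc 0 t0 ∧ ∀ y ∈ Set.Icc x t0, g y = μ} with hA
    have hA0 : t0 ∈ A := by
      refine ⟨⟨ht0.le, le_rfl⟩, fun y hy => ?_⟩
      have : y = t0 := le_antisymm hy.2 hy.1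
      rw [this, hgt0]
    have hAne : A.Nonempty := ⟨t0, hA0⟩
    have hAbdd : BddBelow A := ⟨0, fun x hx => hx.1.1⟩
    set r := sInf A with hr
    have hr1 : r ≤ t0 := csInf_le hAbdd hA0
    have hr2 : 0 ≤ r := le_csInf hAne (fun x hx => hx.1.1)
    have claim1 : ∀ y, r < y → y ≤ t0 → g y = μ := by
      intro y hy1 hy2
      obtain ⟨x, hxA, hyx⟩ := exists_lt_of_csInf_lt hAne hy1
      exact hxA.2 y ⟨hyx.le, hy2⟩
    have claim2 : g r = μ := by
      rcases eq_or_lt_of_le hr1 with h | h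
      · rw [h, hgt0]
      · have hrL : r < L := lt_trans h ht0L
        obtain ⟨s, u, hru, huL, haffR, _⟩ := exists_right_piece hpw hr2 hrL
        set y1 := min u t0 with hy1
        have hy1r : r < y1 := lt_min hru h
        set y2 := (r + y1)/2 with hy2
        have hy12 : y2 < y1 := by rw [hy2]; linarith
        have hy2r : r < y2 := by rw [hy2]; linarith
        have hg1 : g y1 = μ := claim1 y1 hy1r (min_le_right _ _)
        have hg2 : g y2 = μ := claim1 y2 hy2r (le_trans hy12.le (min_le_right _ _))
        have ha1 : g y1 = (s : ℝ) * y1 + (g r - s * r) :=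
          haffR y1 ⟨hy1r.le, min_le_left _ _⟩
        have ha2 : g y2 = (s : ℝ) * y2 + (g r - s * r) :=
          haffR y2 ⟨hy2r.le, le_trans hy12.le (min_le_left _ _)⟩
        have hs0 : (s : ℝ) = 0 := by
          have h12 : (s : ℝ) * y1 = (s : ℝ) * y2 := by
            have e1 : (s : ℝ) * y1 + (g r - s * r) = μ := by rw [← ha1]; exact hg1
            have e2 : (s : ℝ) * y2 + (g r - s * r) = μ := by rw [← ha2]; exact hg2
            linarith
          by_contra hne
          exact absurd (mul_left_cancel₀ hne h12) (ne_of_gt hy12)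
        rw [ha1, hs0] at hg1
        linarith [hg1]
    have claim3 : r = 0 := by
      by_contra hcon
      have hrpos : 0 < r := lt_of_le_of_ne hr2 (Ne.symm hcon)
      have hrL : r < L := lt_of_le_of_lt hr1 ht0L
      obtain ⟨u, u', hu'0, hu'r, hru, huL, hconst⟩ := localc r hrpos hrL claim2
      have huA : u' ∈ A := by
        refine ⟨⟨hu'0, le_trans hu'r.le hr1⟩, fun y hy => ?_⟩
        rcases le_or_gt y r with h | h
        · exact hconst y ⟨hy.1, le_trans h hru.le⟩
        · exact claim1 y h hy.2
      have := csInf_le hAbdd huA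
      rw [← hr] at this
      exact absurd this (not_le.2 hu'r)
    intro y hy
    rcases lt_or_eq_of_le hy.1 with h | h
    · exact claim1 y (by rw [claim3]; exact h) hy.2
    · rw [← h, ← claim3]; exact claim2
  intro x hx
  rcases le_or_gt x t0 with h | h
  · exact left x ⟨hx.1, h⟩
  · exact right x ⟨h.le, hx.2⟩

end ConstLemma
namespace LooplessMetricGraph

lemma BridgeChain.reach_seg {G : LooplessMetricGraph} (B : G.BridgeChain) {A : Set G.E}
    {lo : ℕ} (hlo : lo ≤ B.n) :
    ∀ hi, lo ≤ hi → ∀ (hhi : hi ≤ B.n),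
      (∀ k : Fin B.n, lo ≤ k.1 → k.1 < hi → B.b k ∈ A) →
      G.Reaches A (B.w ⟨lo, Nat.lt_succ_of_le hlo⟩) (B.w ⟨hi, Nat.lt_succ_of_le hhi⟩) := by
  intro hi hlohi
  induction hi, hlohi using Nat.le_induction with
  | base => intro _ _; exact reaches_refl
  | succ m hm ih =>
    intro hm1 hA
    have hmn : m < B.n := hm1
    have hr1 := ih (le_of_lt hmn) (fun k h1 h2 => hA k h1 (Nat.lt_succ_of_lt h2))
    refine reaches_trans hr1 (Relation.ReflTransGen.single ?_)
    have hj := B.joins ⟨m, hmn⟩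
    have hcs : (⟨m, hmn⟩ : Fin B.n).castSucc = ⟨m, Nat.lt_succ_of_le (le_of_lt hmn)⟩ := rfl
    have hsc : (⟨m, hmn⟩ : Fin B.n).succ = ⟨m+1, Nat.lt_succ_of_le hm1⟩ := rfl
    have hbA : B.b ⟨m, hmn⟩ ∈ A := hA ⟨m, hmn⟩ hm (Nat.lt_succ_self m)
    rcases hj with ⟨h1, h2⟩ | ⟨h1, h2⟩
    · exact ⟨B.b ⟨m, hmn⟩, hbA, Or.inl ⟨by rw [h1, hcs], by rw [h2, hsc]⟩⟩
    · exact ⟨B.b ⟨m, hmn⟩, hbA, Or.inr ⟨by rw [h1, hsc], by rw [h2, hcs]⟩⟩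

end LooplessMetricGraph

open LooplessMetricGraph

/-- **Lemma 3.25.**  Let `G` be a finite connected discrete graph without
loops and without `1`-valent vertices, let `Γ` be its associated metric
graph, let `B` be a maximal chain of bridge edges in `Γ` with endpoints
`v₁, v₂`, and let `T` be a spanning tree of `Γ`.  Let `D` be an effective
divisor on `Γ` equivalent to `2K_G` such that (1) the support of `D` contains
a point from the relative interior of each edge contained in the complement
of `T`, and (2) `D ≥ K_G − (v₁) − (v₂)`.  If `f` is a tropical rational
function on `Γ` with `div(f) = D − 2K_G`, then the locus of points of `Γ`
where `f` achieves its minimum value is equal to `B`. -/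
theorem statement_18 (G : LooplessMetricGraph) (hconn : G.Connected)
    (hval : ∀ v : G.V, G.valAt v ≠ 1)
    (B : G.BridgeChain) (hB : B.IsMaximal)
    (T : Set G.E) (hT : G.IsSpanningTree T)
    (D : G.Point → ℤ) (hDfin : (Function.support D).Finite)
    (hDeff : ∀ p, 0 ≤ D p)
    (hDsupp : ∀ e' : G.E, e' ∉ T →
      ∃ t : {t : ℝ // 0 < t ∧ t < G.len e'}, D (Sum.inr ⟨e', t⟩) ≠ 0)
    (hDge : ∀ p : G.Point,
      G.canonical p - (if p = Sum.inl (B.w 0) then 1 else 0) -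
        (if p = Sum.inl (B.w (Fin.last B.n)) then 1 else 0) ≤ D p)
    (f : G.Point → ℝ)
    (hf : G.HasDivisor f (fun p => D p - 2 * G.canonical p)) :
    {p | ∀ q, f p ≤ f q} = B.points := by
  classical
  obtain ⟨htrop, hdiv⟩ := hf
  set v1 := B.w 0 with hv1def
  set v2 := B.w (Fin.last B.n) with hv2def
  have hv12 : v1 ≠ v2 := by
    rw [hv1def, hv2def]
    intro h
    have h2 := congrArg Fin.val (B.w_inj h)
    simp [Fin.last] at h2
    have := B.n_pos
    omega
  have hEne : Nonempty G.E := ⟨B.b ⟨0, B.n_pos⟩⟩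
  choose m hm1 hm2 using fun e : G.E => pw_exists_min (htrop e)
  set μ := Finset.univ.inf' Finset.univ_nonempty m with hμdef
  -- edgeFun evaluation lemmas
  have hef0 : ∀ e, G.edgeFun f e 0 = f (Sum.inl (G.src e)) := by
    intro e
    unfold LooplessMetricGraph.edgeFun
    rw [dif_neg (by simp), if_pos le_rfl]
  have heflen : ∀ e, G.edgeFun f e (G.len e) = f (Sum.inl (G.dst e)) := by
    intro e
    unfold LooplessMetricGraph.edgeFun
    rw [dif_neg (by simp), if_neg (not_le.2 (G.len_pos e))]
  have hefint : ∀ e t (h : 0 < t ∧ t < G.len e),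
      G.edgeFun f e t = f (Sum.inr ⟨e, t, h⟩) := by
    intro e t h
    unfold LooplessMetricGraph.edgeFun
    rw [dif_pos h]
  have hedgecases : ∀ e x, x ∈ Set.Icc 0 (G.len e) → ∃ p : G.Point, G.edgeFun f e x = f p := by
    intro e x hx
    by_cases h : 0 < x ∧ x < G.len e
    · exact ⟨_, hefint e x h⟩
    · rcases not_and_or.1 h with h1 | h1
      · have hx0 : x = 0 := le_antisymm (not_lt.1 h1) hx.1
        exact ⟨_, by rw [hx0]; exact hef0 e⟩
      · have hxL : x = G.len e := le_antisymm hx.2 (not_lt.1 h1)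
        exact ⟨_, by rw [hxL]; exact heflen e⟩
  -- every vertex lies on an edge
  have hvert : ∀ v : G.V, ∃ e, G.src e = v ∨ G.dst e = v := by
    intro v
    by_cases hv : v = B.w 0
    · have hcs : (⟨0, B.n_pos⟩ : Fin B.n).castSucc = (0 : Fin (B.n+1)) := by
        apply Fin.ext; simp
      obtain ⟨h1, h2⟩ | ⟨h1, h2⟩ := B.joins ⟨0, B.n_pos⟩
      · exact ⟨B.b ⟨0, B.n_pos⟩, Or.inl (by rw [h1, hcs, ← hv])⟩
      · exact ⟨B.b ⟨0, B.n_pos⟩, Or.inr (by rw [h2, hcs, ← hv])⟩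
    · have hr := hconn v (B.w 0)
      rcases Relation.ReflTransGen.cases_head hr with h | ⟨c, hstep, -⟩
      · exact absurd h hv
      · obtain ⟨e, -, hor⟩ := hstep
        rcases hor with ⟨h1, -⟩ | ⟨-, h2⟩
        · exact ⟨e, Or.inl h1⟩
        · exact ⟨e, Or.inr h2⟩
  -- μ is a global lower bound for f
  have hlow : ∀ p, μ ≤ f p := by
    intro p
    match p with
    | Sum.inl v =>
      obtain ⟨e, he⟩ := hvert v
      have h1 : μ ≤ m e := Finset.inf'_le _ (Finset.mem_univ e)
      rcases he with h | h
      · have h2 := hm1 e 0 ⟨le_rfl, (G.len_pos e).le⟩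
        rw [hef0 e, h] at h2
        linarith
      · have h2 := hm1 e (G.len e) ⟨(G.len_pos e).le, le_rfl⟩
        rw [heflen e, h] at h2
        linarith
    | Sum.inr q =>
      obtain ⟨e, t, ht⟩ := q
      have h1 : μ ≤ m e := Finset.inf'_le _ (Finset.mem_univ e)
      have h2 := hm1 e t ⟨ht.1.le, ht.2.le⟩
      rw [hefint e t ht] at h2
      linarith
  -- μ is attained
  obtain ⟨pstar, hpstar⟩ : ∃ p, f p = μ := by
    obtain ⟨estar, -, hestar⟩ := Finset.exists_mem_eq_inf'
      (Finset.univ_nonempty (α := G.E)) m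
    obtain ⟨xstar, hxstar, hgxstar⟩ := hm2 estar
    obtain ⟨p, hp⟩ := hedgecases estar xstar hxstar
    refine ⟨p, ?_⟩
    rw [← hp, hgxstar, hμdef, hestar]
  -- the min locus is the μ-level set
  have hMchar : {p : G.Point | ∀ q, f p ≤ f q} = {p | f p = μ} := by
    apply Set.ext
    intro p
    constructor
    · intro h
      exact le_antisymm (le_trans (h pstar) (le_of_eq hpstar)) (hlow p)
    · intro h q
      rw [h]
      exact hlow q
  -- the edges whose interior meets the min locus
  set Sset : Set G.E :=
    {e | ∃ t, ∃ ht : 0 < t ∧ t < G.len e, f (Sum.inr ⟨e, t, ht⟩) = μ} with hSsetdef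
  set SF : Finset G.E := Finset.univ.filter (fun e => e ∈ Sset) with hSFdef
  have hSFmem : ∀ e, e ∈ SF ↔ e ∈ Sset := by
    intro e; rw [hSFdef]; simp
  -- outgoing slope sums at interior points are nonpositive
  have hslopes : ∀ e x, 0 < x → x < G.len e → ∃ sr sl : ℝ,
      HasRightSlope (G.edgeFun f e) x sr ∧ HasLeftSlope (G.edgeFun f e) x sl ∧
      sr + sl ≤ 0 := by
    intro e x h1 h2
    obtain ⟨sr, sl, hsr, hsl, hsum⟩ := hdiv (Sum.inr ⟨e, x, h1, h2⟩)
    refine ⟨sr, sl, hsr, hsl, ?_⟩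
    have hc : G.canonical (Sum.inr ⟨e, x, h1, h2⟩) = 0 := rfl
    have h4 : (fun p => D p - 2 * G.canonical p) (Sum.inr ⟨e, x, h1, h2⟩)
        = D (Sum.inr ⟨e, x, h1, h2⟩) := by
      show D _ - 2 * G.canonical _ = _
      rw [hc]; ring
    rw [hsum, h4]
    have h3 : (0:ℝ) ≤ ((D (Sum.inr ⟨e, x, h1, h2⟩) : ℤ) : ℝ) := by
      exact_mod_cast hDeff _
    linarith
  -- an edge meeting the min locus in its interior is constantly μ
  have hconstS : ∀ e, e ∈ Sset → ∀ x ∈ Set.Icc 0 (G.len e), G.edgeFun f e x = μ := by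
    intro e he x hx
    obtain ⟨t, ht, hft⟩ := he
    refine const_of_interior_min (htrop e) ?_ (hslopes e) ht.1 ht.2 ?_ x hx
    · intro y hy
      obtain ⟨p, hp⟩ := hedgecases e y hy
      rw [hp]; exact hlow p
    · rw [hefint e t ht]; exact hft
  -- endpoints of min edges are min vertices
  have hends : ∀ e, e ∈ Sset →
      f (Sum.inl (G.src e)) = μ ∧ f (Sum.inl (G.dst e)) = μ := by
    intro e he
    constructor
    · rw [← hef0 e]; exact hconstS e he 0 ⟨le_rfl, (G.len_pos e).le⟩
    · rw [← heflen e]; exact hconstS e he (G.len e) ⟨(G.len_pos e).le, le_rfl⟩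
  -- min edges lie in the spanning tree
  have hST : ∀ e, e ∈ Sset → e ∈ T := by
    intro e he
    by_contra hnT
    obtain ⟨⟨t, ht⟩, hD⟩ := hDsupp e hnT
    obtain ⟨sr, sl, hsr, hsl, hsum⟩ := hdiv (Sum.inr ⟨e, t, ht⟩)
    have hg : ∀ y ∈ Set.Icc t (G.len e), G.edgeFun f e y = (0:ℝ) * y + μ := by
      intro y hy
      rw [zero_mul, zero_add]
      exact hconstS e he y ⟨le_trans ht.1.le hy.1, hy.2⟩
    have hg' : ∀ y ∈ Set.Icc 0 t, G.edgeFun f e y = (0:ℝ) * y + μ := by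
      intro y hy
      rw [zero_mul, zero_add]
      exact hconstS e he y ⟨hy.1, le_trans hy.2 ht.2.le⟩
    have h1 : HasRightSlope (G.edgeFun f e) t 0 := hasRightSlope_of_affine ht.2 hg
    have h2 : HasLeftSlope (G.edgeFun f e) t 0 := by
      have := hasLeftSlope_of_affine ht.1 hg'
      simpa using this
    have hsr0 : sr = 0 := hasRightSlope_unique hsr h1
    have hsl0 : sl = 0 := hasLeftSlope_unique hsl h2
    rw [hsr0, hsl0] at hsum
    have hc : G.canonical (Sum.inr ⟨e, t, ht⟩) = 0 := rfl
    have h4 : (fun p => D p - 2 * G.canonical p) (Sum.inr ⟨e, t, ht⟩)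
        = D (Sum.inr ⟨e, t, ht⟩) := by
      show D _ - 2 * G.canonical _ = _
      rw [hc]; ring
    rw [h4] at hsum
    have hDge1 : 1 ≤ D (Sum.inr ⟨e, t, ht⟩) := by
      have := hDeff (Sum.inr ⟨e, t, ht⟩)
      omega
    have h3 : (1:ℝ) ≤ ((D (Sum.inr ⟨e, t, ht⟩) : ℤ) : ℝ) := by exact_mod_cast hDge1
    linarith
  -- core vertex degree inequality
  have hcore : ∀ v : G.V, f (Sum.inl v) = μ →
      (2:ℝ) - (if v = v1 then 1 else 0) - (if v = v2 then 1 else 0) ≤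
        (G.degF SF v : ℝ) := by
    intro v hfv
    obtain ⟨sOut, sIn, hOut, hIn, hsum⟩ := hdiv (Sum.inl v)
    set A1 := Finset.univ.filter (fun e => G.src e = v) with hA1
    set A2 := Finset.univ.filter (fun e => G.dst e = v) with hA2
    have hOutLB : ∀ e ∈ A1, (if e ∈ Sset then (0:ℝ) else 1) ≤ sOut e := by
      intro e he
      rw [hA1, Finset.mem_filter] at he
      have hsrc := he.2
      obtain ⟨s, u, h0u, huL, haff, hRS⟩ :=
        exists_right_piece (htrop e) le_rfl (G.len_pos e)
      have hse : sOut e = (s:ℝ) := hasRightSlope_unique (hOut e hsrc) hRS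
      have hg0 : G.edgeFun f e 0 = μ := by rw [hef0 e, hsrc]; exact hfv
      have hgu : μ ≤ G.edgeFun f e u := by
        obtain ⟨p, hp⟩ := hedgecases e u ⟨h0u.le, huL⟩
        rw [hp]; exact hlow p
      have haffu : G.edgeFun f e u = (s:ℝ)*u + (G.edgeFun f e 0 - s*0) :=
        haff u ⟨h0u.le, le_rfl⟩
      have hs0 : (0:ℝ) ≤ (s:ℝ) := by nlinarith
      by_cases hmem : e ∈ Sset
      · rw [if_pos hmem, hse]; exact hs0
      · rw [if_neg hmem, hse]
        have hsne : (s:ℝ) ≠ 0 := by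
          intro h0
          apply hmem
          have hu2 : 0 < u/2 ∧ u/2 < G.len e := ⟨by linarith, by linarith⟩
          refine ⟨u/2, hu2, ?_⟩
          rw [← hefint e _ hu2]
          have h5 := haff (u/2) ⟨by linarith, by linarith⟩
          rw [h5, h0, hg0]; ring
        have hint : (1:ℤ) ≤ s := by
          have a1 : (0:ℤ) ≤ s := by exact_mod_cast hs0
          have a2 : s ≠ 0 := fun hh => hsne (by rw [hh]; norm_num)
          omega
        exact_mod_cast hint
    have hInLB : ∀ e ∈ A2, (if e ∈ Sset then (0:ℝ) else 1) ≤ sIn e := by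
      intro e he
      rw [hA2, Finset.mem_filter] at he
      have hdst := he.2
      obtain ⟨s, u, hu0, hulen, haff, hLS⟩ :=
        exists_left_piece (htrop e) (G.len_pos e) le_rfl
      have hse : sIn e = -(s:ℝ) := hasLeftSlope_unique (hIn e hdst) hLS
      have hgL : G.edgeFun f e (G.len e) = μ := by rw [heflen e, hdst]; exact hfv
      have hgu : μ ≤ G.edgeFun f e u := by
        obtain ⟨p, hp⟩ := hedgecases e u ⟨hu0, hulen.le⟩
        rw [hp]; exact hlow p
      have haffu : G.edgeFun f e u
          = (s:ℝ)*u + (G.edgeFun f e (G.len e) - s*(G.len e)) :=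
        haff u ⟨le_rfl, hulen.le⟩
      have hs0 : (s:ℝ) ≤ 0 := by nlinarith
      by_cases hmem : e ∈ Sset
      · rw [if_pos hmem, hse]; linarith
      · rw [if_neg hmem, hse]
        have hsne : (s:ℝ) ≠ 0 := by
          intro h0
          apply hmem
          have hu2 : 0 < (u + G.len e)/2 ∧ (u + G.len e)/2 < G.len e :=
            ⟨by linarith [G.len_pos e], by linarith⟩
          refine ⟨_, hu2, ?_⟩
          rw [← hefint e _ hu2]
          have h5 := haff ((u + G.len e)/2) ⟨by linarith, by linarith⟩
          rw [h5, h0, hgL]; ring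
        have hint : s ≤ (-1:ℤ) := by
          have a1 : s ≤ (0:ℤ) := by exact_mod_cast hs0
          have a2 : s ≠ 0 := fun hh => hsne (by rw [hh]; norm_num)
          omega
        have : (s:ℝ) ≤ -1 := by exact_mod_cast hint
        linarith
    have hsum1 : ((A1.filter (fun e => e ∉ Sset)).card : ℝ) ≤ ∑ e ∈ A1, sOut e := by
      have h1 : ∀ e ∈ A1, (if e ∉ Sset then (1:ℝ) else 0) ≤ sOut e := by
        intro e he
        have h2 := hOutLB e he
        by_cases h : e ∈ Sset <;> simp [h] at h2 ⊢ <;> linarith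
      have h2 : ∑ e ∈ A1, (if e ∉ Sset then (1:ℝ) else 0)
          = ((A1.filter (fun e => e ∉ Sset)).card : ℝ) := Finset.sum_boole _ _
      rw [← h2]
      exact Finset.sum_le_sum h1
    have hsum2 : ((A2.filter (fun e => e ∉ Sset)).card : ℝ) ≤ ∑ e ∈ A2, sIn e := by
      have h1 : ∀ e ∈ A2, (if e ∉ Sset then (1:ℝ) else 0) ≤ sIn e := by
        intro e he
        have h2 := hInLB e he
        by_cases h : e ∈ Sset <;> simp [h] at h2 ⊢ <;> linarith
      have h2 : ∑ e ∈ A2, (if e ∉ Sset then (1:ℝ) else 0)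
          = ((A2.filter (fun e => e ∉ Sset)).card : ℝ) := Finset.sum_boole _ _
      rw [← h2]
      exact Finset.sum_le_sum h1
    have hc1 : (A1.filter (fun e => e ∈ Sset)).card
        + (A1.filter (fun e => ¬ e ∈ Sset)).card = A1.card :=
      Finset.card_filter_add_card_filter_not _
    have hc2 : (A2.filter (fun e => e ∈ Sset)).card
        + (A2.filter (fun e => ¬ e ∈ Sset)).card = A2.card :=
      Finset.card_filter_add_card_filter_not _
    have hcc1 : ((A1.filter (fun e => e ∈ Sset)).card : ℝ)
        + ((A1.filter (fun e => e ∉ Sset)).card : ℝ) = (A1.card:ℝ) := by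
      exact_mod_cast hc1
    have hcc2 : ((A2.filter (fun e => e ∈ Sset)).card : ℝ)
        + ((A2.filter (fun e => e ∉ Sset)).card : ℝ) = (A2.card:ℝ) := by
      exact_mod_cast hc2
    have hdegf1 : SF.filter (fun e => G.src e = v) = A1.filter (fun e => e ∈ Sset) := by
      apply Finset.ext
      intro e
      rw [hSFdef, hA1]
      simp only [Finset.mem_filter, Finset.mem_univ, true_and]
      tauto
    have hdegf2 : SF.filter (fun e => G.dst e = v) = A2.filter (fun e => e ∈ Sset) := by
      apply Finset.ext
      intro e
      rw [hSFdef, hA2]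
      simp only [Finset.mem_filter, Finset.mem_univ, true_and]
      tauto
    have hdegF : (G.degF SF v : ℝ) = ((A1.filter (fun e => e ∈ Sset)).card : ℝ)
        + ((A2.filter (fun e => e ∈ Sset)).card : ℝ) := by
      unfold LooplessMetricGraph.degF
      rw [hdegf1, hdegf2]
      push_cast
      ring
    have hvalc : (G.valAt v : ℝ) = (A1.card : ℝ) + (A2.card : ℝ) := by
      have : G.valAt v = A1.card + A2.card := rfl
      rw [this]
      push_cast
      ring
    have hsumR : (∑ e ∈ A1, sOut e) + (∑ e ∈ A2, sIn e)
        = 2*((G.valAt v : ℝ) - 2) - ((D (Sum.inl v) : ℤ):ℝ) := by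
      rw [hsum]
      have hcan : (fun p => D p - 2 * G.canonical p) (Sum.inl v)
          = D (Sum.inl v) - 2*((G.valAt v : ℤ) - 2) := rfl
      rw [hcan]
      push_cast
      ring
    have hDv' : ((G.valAt v : ℤ) - 2) - (if v = v1 then 1 else 0)
        - (if v = v2 then 1 else 0) ≤ D (Sum.inl v) := by
      have hDv := hDge (Sum.inl v)
      have e1 : (if (Sum.inl v : G.Point) = Sum.inl v1 then (1:ℤ) else 0)
          = (if v = v1 then 1 else 0) := by
        by_cases h : v = v1
        · rw [if_pos (by rw [h]), if_pos h]
        · rw [if_neg (by simp [h]), if_neg h]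
      have e2 : (if (Sum.inl v : G.Point) = Sum.inl v2 then (1:ℤ) else 0)
          = (if v = v2 then 1 else 0) := by
        by_cases h : v = v2
        · rw [if_pos (by rw [h]), if_pos h]
        · rw [if_neg (by simp [h]), if_neg h]
      have hcan : G.canonical (Sum.inl v) = (G.valAt v : ℤ) - 2 := rfl
      rw [e1, e2, hcan] at hDv
      exact hDv
    have hmain : ∀ i1 i2 : ℝ,
        (((G.valAt v:ℝ) - 2) - i1 - i2 ≤ ((D (Sum.inl v) : ℤ):ℝ)) →
        (2:ℝ) - i1 - i2 ≤ (G.degF SF v : ℝ) := by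
      intro i1 i2 hDvR
      linarith [hsumR, hsum1, hsum2, hcc1, hcc2, hdegF, hvalc]
    by_cases h1v : v = v1 <;> by_cases h2v : v = v2
    · exact absurd (h1v.symm.trans h2v) hv12
    · rw [if_pos h1v, if_neg h2v]
      rw [if_pos h1v, if_neg h2v] at hDv'
      exact hmain 1 0 (by exact_mod_cast hDv')
    · rw [if_neg h1v, if_pos h2v]
      rw [if_neg h1v, if_pos h2v] at hDv'
      exact hmain 0 1 (by exact_mod_cast hDv')
    · rw [if_neg h1v, if_neg h2v]
      rw [if_neg h1v, if_neg h2v] at hDv'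
      exact hmain 0 0 (by exact_mod_cast hDv')
  have hd1 : ∀ e, e ∈ SF → e ∈ Sset := fun e he => (hSFmem e).1 he
  have hSFT : ↑SF ⊆ T := by
    intro e he
    exact hST e (hd1 e (Finset.mem_coe.1 he))
  have hdich : ∀ v : G.V, v ≠ v1 → v ≠ v2 → G.degF SF v = 0 ∨ 2 ≤ G.degF SF v := by
    intro v hne1 hne2
    by_cases h0 : G.degF SF v = 0
    · exact Or.inl h0
    right
    have h1 : 1 ≤ G.degF SF v := Nat.one_le_iff_ne_zero.2 h0
    obtain ⟨e, he, hinc⟩ := exists_incident h1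
    have heS := hd1 e he
    have hfv : f (Sum.inl v) = μ := by
      rcases hinc with h | h
      · rw [← h]; exact (hends e heS).1
      · rw [← h]; exact (hends e heS).2
    have h2 := hcore v hfv
    rw [if_neg hne1, if_neg hne2] at h2
    have h3 : (2:ℝ) ≤ (G.degF SF v : ℝ) := by linarith
    exact_mod_cast h3
  have hone : ∀ v : G.V, f (Sum.inl v) = μ → 1 ≤ G.degF SF v := by
    intro v hfv
    have h2 := hcore v hfv
    have h3 : (1:ℝ) ≤ (G.degF SF v : ℝ) := by
      by_cases ha : v = v1 <;> by_cases hb : v = v2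
      · exact absurd (ha.symm.trans hb) hv12
      · rw [if_pos ha, if_neg hb] at h2; linarith
      · rw [if_neg ha, if_pos hb] at h2; linarith
      · rw [if_neg ha, if_neg hb] at h2; linarith
    exact_mod_cast h3
  have hSFne : SF.Nonempty := by
    rcases pstar with v | ⟨e, t, ht⟩
    · have h1 := hone v hpstar
      obtain ⟨e, he, -⟩ := exists_incident h1
      exact ⟨e, he⟩
    · exact ⟨e, (hSFmem e).2 ⟨t, ht, hpstar⟩⟩
  have hdegv1 : G.degF SF v1 = 1 := by
    by_contra hne
    have hdeg : ∀ u : G.V, u ≠ v2 → G.degF SF u = 0 ∨ 2 ≤ G.degF SF u := by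
      intro u hu
      by_cases h1 : u = v1
      · rw [h1]
        rcases Nat.lt_or_ge (G.degF SF v1) 1 with h | h
        · exact Or.inl (by omega)
        · right; omega
      · exact hdich u h1 hu
    have := descent hT SF.card SF le_rfl hSFT ⟨v2, hdeg⟩
    rw [this] at hSFne
    exact Finset.not_nonempty_empty hSFne
  have hdegv2 : G.degF SF v2 = 1 := by
    by_contra hne
    have hdeg : ∀ u : G.V, u ≠ v1 → G.degF SF u = 0 ∨ 2 ≤ G.degF SF u := by
      intro u hu
      by_cases h1 : u = v2
      · rw [h1]
        rcases Nat.lt_or_ge (G.degF SF v2) 1 with h | h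
        · exact Or.inl (by omega)
        · right; omega
      · exact hdich u hu h1
    have := descent hT SF.card SF le_rfl hSFT ⟨v1, hdeg⟩
    rw [this] at hSFne
    exact Finset.not_nonempty_empty hSFne
  -- reachability within the min edges
  have hiffS : ∀ e, e ∈ Sset → ∀ x : G.V,
      (G.Reaches Sset x (G.src e) ↔ G.Reaches Sset x (G.dst e)) := by
    intro e he x
    have hstep : G.Step Sset (G.src e) (G.dst e) := ⟨e, he, Or.inl ⟨rfl, rfl⟩⟩
    exact ⟨fun h => reaches_trans h (Relation.ReflTransGen.single hstep),
           fun h => reaches_trans h (Relation.ReflTransGen.single hstep.symm)⟩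
  have hreach12 : G.Reaches Sset v1 v2 := by
    by_contra hnr
    set S1 := SF.filter (fun e => G.Reaches Sset v1 (G.src e)) with hS1def
    have hS1mem : ∀ e, e ∈ S1 ↔ (e ∈ SF ∧ G.Reaches Sset v1 (G.src e)) := by
      intro e; rw [hS1def, Finset.mem_filter]
    have hS1ne : S1.Nonempty := by
      obtain ⟨e, he, hinc⟩ := exists_incident (show 1 ≤ G.degF SF v1 by omega)
      refine ⟨e, (hS1mem e).2 ⟨he, ?_⟩⟩
      rcases hinc with h | h
      · rw [h]; exact reaches_refl
      · exact (hiffS e (hd1 e he) v1).2 (by rw [h]; exact reaches_refl)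
    have hS1T : ↑S1 ⊆ T := by
      intro e he
      have h1 := (Finset.mem_filter.1 (Finset.mem_coe.1 he)).1
      exact hSFT (Finset.mem_coe.2 h1)
    have hdeg' : ∀ u : G.V, u ≠ v1 → G.degF S1 u = 0 ∨ 2 ≤ G.degF S1 u := by
      intro u hu
      by_cases h0 : G.degF S1 u = 0
      · exact Or.inl h0
      right
      obtain ⟨e, he, hinc⟩ := exists_incident (Nat.one_le_iff_ne_zero.2 h0)
      obtain ⟨heSF, heR⟩ := (hS1mem e).1 he
      have heS := hd1 e heSF
      have hRu : G.Reaches Sset v1 u := by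
        rcases hinc with h | h
        · rw [← h]; exact heR
        · rw [← h]; exact (hiffS e heS v1).1 heR
      have hu2 : u ≠ v2 := fun hh => hnr (hh ▸ hRu)
      have hmemiff : ∀ e' ∈ SF, (G.src e' = u ∨ G.dst e' = u) → e' ∈ S1 := by
        intro e' he' hinc'
        refine (hS1mem e').2 ⟨he', ?_⟩
        rcases hinc' with h | h
        · rw [h]; exact hRu
        · exact (hiffS e' (hd1 e' he') v1).2 (by rw [h]; exact hRu)
      have heq : G.degF S1 u = G.degF SF u :=
        degF_eq_of_mem_iff (by rw [hS1def]; exact Finset.filter_subset _ _) hmemiff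
      rcases hdich u hu hu2 with h | h
      · exact absurd (heq.trans h) h0
      · rw [heq]; exact h
    exact absurd (descent hT S1.card S1 le_rfl hS1T ⟨v1, hdeg'⟩)
      (Finset.nonempty_iff_ne_empty.1 hS1ne)
  -- all chain edges are min edges
  have hbiS : ∀ i : Fin B.n, B.b i ∈ Sset := by
    intro i
    by_contra hni
    have hmono1 : G.Reaches (Set.univ \ {B.b i}) v1 v2 := by
      refine reaches_mono ?_ hreach12
      intro e he
      exact ⟨Set.mem_univ _, fun hh => hni ((Set.mem_singleton_iff.1 hh) ▸ he)⟩
    have hA : ∀ k : Fin B.n, (0:ℕ) ≤ k.1 → k.1 < i.1 → B.b k ∈ Set.univ \ {B.b i} := by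
      intro k _ h2
      refine ⟨Set.mem_univ _, fun hh => ?_⟩
      have hki := B.b_inj (Set.mem_singleton_iff.1 hh)
      rw [hki] at h2
      exact absurd h2 (lt_irrefl _)
    have hA' : ∀ k : Fin B.n, i.1+1 ≤ k.1 → k.1 < B.n → B.b k ∈ Set.univ \ {B.b i} := by
      intro k h1 _
      refine ⟨Set.mem_univ _, fun hh => ?_⟩
      have hki := B.b_inj (Set.mem_singleton_iff.1 hh)
      rw [hki] at h1
      omega
    have hile : (i.1 : ℕ) ≤ B.n := le_of_lt i.2
    have hilt : i.1 + 1 ≤ B.n := i.2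
    have h1 := B.reach_seg (A := Set.univ \ {B.b i}) (Nat.zero_le B.n) i.1
      (Nat.zero_le _) hile hA
    have h2 := B.reach_seg (A := Set.univ \ {B.b i}) hilt B.n hilt le_rfl hA'
    have e1 : B.w ⟨0, Nat.lt_succ_of_le (Nat.zero_le B.n)⟩ = v1 := by
      rw [hv1def]; congr 1
      all_goals apply Fin.ext
      all_goals simp
    have e2 : B.w ⟨i.1, Nat.lt_succ_of_le hile⟩ = B.w i.castSucc := by
      congr 1
      all_goals apply Fin.ext
      all_goals simp
    have e3 : B.w ⟨i.1+1, Nat.lt_succ_of_le hilt⟩ = B.w i.succ := by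
      congr 1
      all_goals apply Fin.ext
      all_goals simp
    have e4 : B.w ⟨B.n, Nat.lt_succ_of_le le_rfl⟩ = v2 := by
      rw [hv2def]; congr 1
      all_goals apply Fin.ext
      all_goals simp
    rw [e1, e2] at h1
    rw [e3, e4] at h2
    have hc2 : G.Reaches (Set.univ \ {B.b i}) (B.w i.castSucc) (B.w i.succ) :=
      reaches_trans (reaches_symm h1) (reaches_trans hmono1 (reaches_symm h2))
    have hdet : G.Reaches (Set.univ \ {B.b i}) (G.src (B.b i)) (G.dst (B.b i)) := by
      rcases B.joins i with ⟨j1, j2⟩ | ⟨j1, j2⟩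
      · rw [j1, j2]; exact hc2
      · rw [j1, j2]; exact reaches_symm hc2
    exact B.bridges i (spanning_detour hconn hdet)
  -- the only min edges at chain vertices are chain edges
  have hwonly : ∀ i : Fin (B.n+1), ∀ e, e ∈ Sset →
      (G.src e = B.w i ∨ G.dst e = B.w i) → e ∈ Set.range B.b := by
    intro i e heS hinc
    by_contra heb
    have heSF : e ∈ SF := (hSFmem _).2 heS
    by_cases hieq0 : i.1 = 0
    · have hwi : B.w i = v1 := by
        rw [hv1def]; congr 1; apply Fin.ext; simp [hieq0]
      have hcs0 : ((⟨0, B.n_pos⟩ : Fin B.n).castSucc) = (0 : Fin (B.n+1)) := by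
        apply Fin.ext; simp
      have hb0inc : G.src (B.b ⟨0, B.n_pos⟩) = v1 ∨ G.dst (B.b ⟨0, B.n_pos⟩) = v1 := by
        rcases B.joins ⟨0, B.n_pos⟩ with ⟨ha, -⟩ | ⟨-, hb⟩
        · left; rw [ha, hcs0, ← hv1def]
        · right; rw [hb, hcs0, ← hv1def]
      have hb0S : B.b ⟨0, B.n_pos⟩ ∈ SF := (hSFmem _).2 (hbiS _)
      have hee : e ≠ B.b ⟨0, B.n_pos⟩ := fun hh => heb ⟨_, hh.symm⟩
      have h2 := two_le_degF heSF hb0S hee (hwi ▸ hinc) hb0inc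
      omega
    · by_cases hieqn : i.1 = B.n
      · have hwi : B.w i = v2 := by
          rw [hv2def]; congr 1; apply Fin.ext; simp [hieqn]
        have hnpos := B.n_pos
        have hsl : ((⟨B.n - 1, by omega⟩ : Fin B.n).succ) = Fin.last B.n := by
          apply Fin.ext; simp; omega
        have hbLinc : G.src (B.b ⟨B.n - 1, by omega⟩) = v2 ∨
            G.dst (B.b ⟨B.n - 1, by omega⟩) = v2 := by
          rcases B.joins ⟨B.n - 1, by omega⟩ with ⟨-, hb⟩ | ⟨ha, -⟩
          · right; rw [hb, hsl, ← hv2def]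
          · left; rw [ha, hsl, ← hv2def]
        have hbLS : B.b ⟨B.n - 1, by omega⟩ ∈ SF := (hSFmem _).2 (hbiS _)
        have hee : e ≠ B.b ⟨B.n - 1, by omega⟩ := fun hh => heb ⟨_, hh.symm⟩
        have h2 := two_le_degF heSF hbLS hee (hwi ▸ hinc) hbLinc
        omega
      · -- interior chain vertex
        have hin : i.1 < B.n := by
          have := i.2
          omega
        obtain ⟨z, horz⟩ : ∃ z, (G.src e = B.w i ∧ G.dst e = z) ∨
            (G.src e = z ∧ G.dst e = B.w i) := by
          rcases hinc with h | h
          · exact ⟨G.dst e, Or.inl ⟨h, rfl⟩⟩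
          · exact ⟨G.src e, Or.inr ⟨rfl, h⟩⟩
        have heT : e ∈ T := hST e heS
        have hnz : ¬ G.Reaches (T \ {e}) z (B.w i) := by
          intro hr
          apply tree_no_detour hT heT
          rcases horz with ⟨ha, hb⟩ | ⟨ha, hb⟩
          · rw [ha, hb]; exact reaches_symm hr
          · rw [ha, hb]; exact hr
        have hchainT : ∀ k : Fin B.n, B.b k ∈ T \ {e} := by
          intro k
          exact ⟨bridge_mem_tree hT (B.bridges k),
            fun hh => heb ⟨k, Set.mem_singleton_iff.1 hh⟩⟩
        have hile : (i.1 : ℕ) ≤ B.n := le_of_lt hin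
        have hg1 := B.reach_seg (A := T \ {e}) (Nat.zero_le B.n) i.1
          (Nat.zero_le _) hile (fun k _ _ => hchainT k)
        have hg2 := B.reach_seg (A := T \ {e}) hile B.n hile le_rfl
          (fun k _ _ => hchainT k)
        have e1 : B.w ⟨0, Nat.lt_succ_of_le (Nat.zero_le B.n)⟩ = v1 := by
          rw [hv1def]; congr 1
          all_goals apply Fin.ext
          all_goals simp
        have e2 : B.w ⟨i.1, Nat.lt_succ_of_le hile⟩ = B.w i := by
          congr 1
          all_goals apply Fin.ext
          all_goals simp
        have e4 : B.w ⟨B.n, Nat.lt_succ_of_le le_rfl⟩ = v2 := by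
          rw [hv2def]; congr 1
          all_goals apply Fin.ext
          all_goals simp
        rw [e1, e2] at hg1
        rw [e2, e4] at hg2
        have hRv1 : G.Reaches (T \ {e}) v1 (B.w i) := hg1
        have hRv2 : G.Reaches (T \ {e}) v2 (B.w i) := reaches_symm hg2
        have hnz1 : ¬ G.Reaches (T \ {e}) z v1 := fun hr => hnz (reaches_trans hr hRv1)
        have hnz2 : ¬ G.Reaches (T \ {e}) z v2 := fun hr => hnz (reaches_trans hr hRv2)
        have hzv1 : z ≠ v1 := fun hh => hnz1 (hh ▸ reaches_refl)
        have hzv2 : z ≠ v2 := fun hh => hnz2 (hh ▸ reaches_refl)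
        have hfz : f (Sum.inl z) = μ := by
          rcases horz with ⟨ha, hb⟩ | ⟨ha, hb⟩
          · rw [← hb]; exact (hends e heS).2
          · rw [← ha]; exact (hends e heS).1
        have hdegz : 2 ≤ G.degF SF z := by
          have h2 := hcore z hfz
          rw [if_neg hzv1, if_neg hzv2] at h2
          have h3 : (2:ℝ) ≤ (G.degF SF z : ℝ) := by linarith
          exact_mod_cast h3
        obtain ⟨e₁, he₁SF, he₁ne, he₁inc⟩ := exists_second (e₀ := e) hdegz
        have hiffz : ∀ e', e' ∈ SF → e' ≠ e →
            (G.Reaches (T \ {e}) z (G.src e') ↔ G.Reaches (T \ {e}) z (G.dst e')) := by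
          intro e' he' hne'
          have hstep : G.Step (T \ {e}) (G.src e') (G.dst e') :=
            ⟨e', ⟨hST e' (hd1 e' he'), fun hh => hne' (Set.mem_singleton_iff.1 hh)⟩,
              Or.inl ⟨rfl, rfl⟩⟩
          exact ⟨fun h => reaches_trans h (Relation.ReflTransGen.single hstep),
                 fun h => reaches_trans h (Relation.ReflTransGen.single hstep.symm)⟩
        set Sz := SF.filter (fun e' => e' ≠ e ∧ G.Reaches (T \ {e}) z (G.src e'))
          with hSzdef
        have hSzmem : ∀ e', e' ∈ Sz ↔
            (e' ∈ SF ∧ e' ≠ e ∧ G.Reaches (T \ {e}) z (G.src e')) := by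
          intro e'; rw [hSzdef, Finset.mem_filter]
        have hSzne : Sz.Nonempty := by
          refine ⟨e₁, (hSzmem e₁).2 ⟨he₁SF, he₁ne, ?_⟩⟩
          rcases he₁inc with h | h
          · rw [h]; exact reaches_refl
          · exact (hiffz e₁ he₁SF he₁ne).2 (by rw [h]; exact reaches_refl)
        have hSzT : ↑Sz ⊆ T := by
          intro e' he'
          have h1 := (Finset.mem_filter.1 (Finset.mem_coe.1 he')).1
          exact hSFT (Finset.mem_coe.2 h1)
        have hdegz' : ∀ u : G.V, u ≠ z → G.degF Sz u = 0 ∨ 2 ≤ G.degF Sz u := by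
          intro u hu
          by_cases h0 : G.degF Sz u = 0
          · exact Or.inl h0
          right
          obtain ⟨e', he', hinc'⟩ := exists_incident (Nat.one_le_iff_ne_zero.2 h0)
          obtain ⟨he'SF, he'ne, he'R⟩ := (hSzmem e').1 he'
          have hRu : G.Reaches (T \ {e}) z u := by
            rcases hinc' with h | h
            · rw [← h]; exact he'R
            · rw [← h]; exact (hiffz e' he'SF he'ne).1 he'R
          have huv1 : u ≠ v1 := fun hh => hnz1 (hh ▸ hRu)
          have huv2 : u ≠ v2 := fun hh => hnz2 (hh ▸ hRu)
          have huwi : u ≠ B.w i := fun hh => hnz (hh ▸ hRu)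
          have hmemiff : ∀ e'' ∈ SF, (G.src e'' = u ∨ G.dst e'' = u) → e'' ∈ Sz := by
            intro e'' he'' hinc''
            have hne'' : e'' ≠ e := by
              intro hh
              subst hh
              rcases horz with ⟨ha, hb⟩ | ⟨ha, hb⟩ <;> rcases hinc'' with h | h
              · exact huwi (ha.symm.trans h).symm
              · exact hu (hb.symm.trans h).symm
              · exact hu (ha.symm.trans h).symm
              · exact huwi (hb.symm.trans h).symm
            refine (hSzmem e'').2 ⟨he'', hne'', ?_⟩
            rcases hinc'' with h | h
            · rw [h]; exact hRu
            · exact (hiffz e'' he'' hne'').2 (by rw [h]; exact hRu)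
          have heq : G.degF Sz u = G.degF SF u :=
            degF_eq_of_mem_iff (by rw [hSzdef]; exact Finset.filter_subset _ _) hmemiff
          rcases hdich u huv1 huv2 with h | h
          · exact absurd (heq.trans h) h0
          · rw [heq]; exact h
        exact absurd (descent hT Sz.card Sz le_rfl hSzT ⟨z, hdegz'⟩)
          (Finset.nonempty_iff_ne_empty.1 hSzne)
  -- all min edges are reachable from v1
  have hallreach : ∀ e, e ∈ Sset → G.Reaches Sset v1 (G.src e) := by
    by_contra hna
    push_neg at hna
    obtain ⟨e0, he0S, he0n⟩ := hna
    set S2 := SF.filter (fun e => ¬ G.Reaches Sset v1 (G.src e)) with hS2def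
    have hS2mem : ∀ e, e ∈ S2 ↔ (e ∈ SF ∧ ¬ G.Reaches Sset v1 (G.src e)) := by
      intro e; rw [hS2def, Finset.mem_filter]
    have hS2ne : S2.Nonempty := ⟨e0, (hS2mem e0).2 ⟨(hSFmem e0).2 he0S, he0n⟩⟩
    have hS2T : ↑S2 ⊆ T := by
      intro e he
      have h1 := (Finset.mem_filter.1 (Finset.mem_coe.1 he)).1
      exact hSFT (Finset.mem_coe.2 h1)
    have hdeg2 : ∀ u : G.V, u ≠ v1 → G.degF S2 u = 0 ∨ 2 ≤ G.degF S2 u := by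
      intro u hu
      by_cases h0 : G.degF S2 u = 0
      · exact Or.inl h0
      right
      obtain ⟨e, he, hinc⟩ := exists_incident (Nat.one_le_iff_ne_zero.2 h0)
      obtain ⟨heSF, heR⟩ := (hS2mem e).1 he
      have heS := hd1 e heSF
      have hnRu : ¬ G.Reaches Sset v1 u := by
        intro hr
        apply heR
        rcases hinc with h | h
        · rw [← h] at hr; exact hr
        · exact (hiffS e heS v1).2 (by rw [h]; exact hr)
      have huv1 : u ≠ v1 := fun hh => hnRu (hh ▸ reaches_refl)
      have huv2 : u ≠ v2 := fun hh => hnRu (hh ▸ hreach12)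
      have hmemiff : ∀ e' ∈ SF, (G.src e' = u ∨ G.dst e' = u) → e' ∈ S2 := by
        intro e' he' hinc'
        refine (hS2mem e').2 ⟨he', ?_⟩
        intro hr'
        apply hnRu
        rcases hinc' with h | h
        · rw [← h]; exact hr'
        · rw [← h]; exact (hiffS e' (hd1 e' he') v1).1 hr'
      have heq : G.degF S2 u = G.degF SF u :=
        degF_eq_of_mem_iff (by rw [hS2def]; exact Finset.filter_subset _ _) hmemiff
      rcases hdich u huv1 huv2 with h | h
      · exact absurd (heq.trans h) h0
      · rw [heq]; exact h
    exact absurd (descent hT S2.card S2 le_rfl hS2T ⟨v1, hdeg2⟩)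
      (Finset.nonempty_iff_ne_empty.1 hS2ne)
  -- vertices reachable from v1 within min edges are chain vertices
  have hreachw : ∀ u : G.V, G.Reaches Sset v1 u → ∃ i : Fin (B.n+1), u = B.w i := by
    intro u hr
    induction hr with
    | refl => exact ⟨0, hv1def⟩
    | tail hab hstep ih =>
      obtain ⟨i, hi⟩ := ih
      obtain ⟨e, heS, hor⟩ := hstep
      have hib : e ∈ Set.range B.b := by
        apply hwonly i e heS
        rcases hor with ⟨ha, -⟩ | ⟨-, hb⟩
        · exact Or.inl (ha.trans hi)
        · exact Or.inr (hb.trans hi)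
      obtain ⟨j, hj⟩ := hib
      rcases B.joins j with ⟨ha', hb'⟩ | ⟨ha', hb'⟩ <;> rcases hor with ⟨ha, hb⟩ | ⟨ha, hb⟩
      · exact ⟨j.succ, by rw [← hb, ← hj, hb']⟩
      · exact ⟨j.castSucc, by rw [← ha, ← hj, ha']⟩
      · exact ⟨j.castSucc, by rw [← hb, ← hj, hb']⟩
      · exact ⟨j.succ, by rw [← ha, ← hj, ha']⟩
  have hSrange : ∀ e, e ∈ Sset → e ∈ Set.range B.b := by
    intro e heS
    obtain ⟨i, hi⟩ := hreachw (G.src e) (hallreach e heS)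
    exact hwonly i e heS (Or.inl hi)
  -- final set equality
  rw [hMchar]
  apply Set.ext
  intro p
  unfold LooplessMetricGraph.BridgeChain.points
  constructor
  · intro hp
    rcases p with v | ⟨e, t, ht⟩
    · have h1 : 1 ≤ G.degF SF v := hone v hp
      obtain ⟨e, he, hinc⟩ := exists_incident h1
      obtain ⟨j, hj⟩ := hSrange e (hd1 e he)
      refine Set.mem_iUnion.2 ⟨j, ?_⟩
      rcases hinc with h | h
      · exact Or.inl (by rw [← h, hj])
      · exact Or.inr (Or.inl (by rw [← h, hj]))
    · have heS : e ∈ Sset := ⟨t, ht, hp⟩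
      obtain ⟨j, hj⟩ := hSrange e heS
      refine Set.mem_iUnion.2 ⟨j, Or.inr (Or.inr ?_)⟩
      subst hj
      exact ⟨⟨t, ht⟩, rfl⟩
  · intro hp
    obtain ⟨i, hpi⟩ := Set.mem_iUnion.1 hp
    have hbS : B.b i ∈ Sset := hbiS i
    rcases hpi with h | h | ⟨⟨tv, htv⟩, h⟩
    · show f p = μ
      rw [h]
      exact (hends _ hbS).1
    · show f p = μ
      rw [h]
      exact (hends _ hbS).2
    · show f p = μ
      rw [h, ← hefint _ tv htv]
      exact hconstS _ hbS tv ⟨htv.1.le, htv.2.le⟩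

end
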